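/- arXiv:1308.2368 — 2 statements merged into one kernel-verified Lean document; each statement's English description precedes it below -/
import Mathlib

section
/- The Mycielski graph M_2(P_4) of the path on four vertices is not an interval graph, hence box(M_2(P_4)) ≥ 2 > 1 = box(P_4); thus there exists a graph G with no focal vertices such that box(M_2(G)) > box(G). -/
open SimpleGraph

/-- `G` has a representation by axis-parallel boxes in `ℝ^k`: distinct vertices are
adjacent iff their boxes intersect. -/
def HasBoxRep {V : Type*} (G : SimpleGraph V) (k : ℕ) : Prop :=
  ∃ lo hi : V → Fin k → ℝ,
    ∀ u v : V, u ≠ v →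
      (G.Adj u v ↔ ∀ i, max (lo u i) (lo v i) ≤ min (hi u i) (hi v i))

/-- The boxicity of a graph: the least `k` such that `G` has a box representation
in `ℝ^k` (0 for complete graphs). -/
noncomputable def boxicity {V : Type*} (G : SimpleGraph V) : ℕ :=
  sInf {k | HasBoxRep G k}

/-- An interval graph: an intersection graph of closed intervals on the real line. -/
def IsIntervalGraph {V : Type*} (G : SimpleGraph V) : Prop := HasBoxRep G 1

/-- A cointerval graph: the complement is an interval graph. -/
def Cointerval {V : Type*} (G : SimpleGraph V) : Prop := IsIntervalGraph Gᶜ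

/-- The generalized Mycielski graph `M_r(G)`: vertex `none` is the apex `z`,
`some (v, i)` is the copy `v_{i+1}` of `v` in level `i`.  Level `0` induces a copy of `G`,
consecutive levels are joined by `u_{i-1}v_i, v_{i-1}u_i` for `uv ∈ E(G)`, and `z`
is joined to all vertices of the top level `r-1`. -/
def genMycielski {V : Type*} (G : SimpleGraph V) (r : ℕ) :
    SimpleGraph (Option (V × Fin r)) :=
  SimpleGraph.fromRel (fun a b =>
    match a, b with
    | some (u, i), some (v, j) =>
        (i = j ∧ (i : ℕ) = 0 ∧ G.Adj u v) ∨ ((j : ℕ) = (i : ℕ) + 1 ∧ G.Adj u v)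
    | some (_, i), none => (i : ℕ) = r - 1
    | none, _ => False)

/-- A focal (universal) vertex: adjacent to all other vertices. -/
def IsFocal {V : Type*} (G : SimpleGraph V) (v : V) : Prop :=
  ∀ w, w ≠ v → G.Adj v w

/-- `G` with `n` additional universal vertices, i.e. the `n`-th focalization `G^{fⁿ}`. -/
def addUniversal {V : Type*} (G : SimpleGraph V) (n : ℕ) :
    SimpleGraph (V ⊕ Fin n) :=
  SimpleGraph.fromRel (fun a b =>
    match a, b with
    | Sum.inl u, Sum.inl v => G.Adj u v
    | _, _ => True)

/-- The edge clique cover number: the minimum number of cliques covering all edges. -/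
noncomputable def edgeCliqueCoverNumber {V : Type*} (G : SimpleGraph V) : ℕ :=
  sInf {k | ∃ f : Fin k → Set V, (∀ i, G.IsClique (f i)) ∧
    ∀ u v, G.Adj u v → ∃ i, u ∈ f i ∧ v ∈ f i}

/-- Disjoint union of two graphs. -/
def disjUnionGraph {α β : Type*} (G : SimpleGraph α) (H : SimpleGraph β) :
    SimpleGraph (α ⊕ β) :=
  SimpleGraph.fromRel (fun a b =>
    match a, b with
    | Sum.inl u, Sum.inl v => G.Adj u v
    | Sum.inr u, Sum.inr v => H.Adj u v
    | _, _ => False)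

/-- The complete multipartite graph with parts `V i`. -/
def completeMultipartite {ι : Type*} (V : ι → Type*) : SimpleGraph (Σ i, V i) where
  Adj a b := a.1 ≠ b.1
  symm := ⟨fun _ _ h => Ne.symm h⟩
  loopless := ⟨fun _ h => h rfl⟩

lemma c4_not_interval (la ha lb hb lc hc ld hd : ℝ)
    (hab : max la lb ≤ min ha hb) (hbc : max lb lc ≤ min hb hc)
    (hcd : max lc ld ≤ min hc hd) (hda : max ld la ≤ min hd ha)
    (hac : ¬ max la lc ≤ min ha hc) (hbd : ¬ max lb ld ≤ min hb hd) : False := by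
  simp only [max_le_iff, le_min_iff, not_and_or, not_le] at *
  rcases hac with (h|h)|(h|h) <;> rcases hbd with (h'|h')|(h'|h') <;> linarith

lemma exists_boxRep {V : Type*} [Fintype V] (G : SimpleGraph V) :
    ∃ k, HasBoxRep G k := by
  classical
  refine ⟨Fintype.card (V × V), ?_⟩
  set e := (Fintype.equivFin (V × V)).symm with he
  set lo : V → Fin (Fintype.card (V × V)) → ℝ :=
    fun v i => if ¬ G.Adj (e i).1 (e i).2 ∧ v = (e i).2 ∧ (e i).1 ≠ (e i).2 then 2 else 0 with hlo
  set hi : V → Fin (Fintype.card (V × V)) → ℝ :=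
    fun v i => if ¬ G.Adj (e i).1 (e i).2 ∧ v = (e i).1 ∧ (e i).1 ≠ (e i).2 then 1 else 3 with hhi
  refine ⟨lo, hi, fun u v huv => ?_⟩
  constructor
  · intro hadj i
    by_cases hc : ¬ G.Adj (e i).1 (e i).2 ∧ (e i).1 ≠ (e i).2
    · obtain ⟨hna, hne⟩ := hc
      have hna2 : ¬ G.Adj (e i).2 (e i).1 := fun h => hna h.symm
      have L : ∀ x : V, lo x i = if x = (e i).2 then 2 else 0 := fun x => by
        by_cases h : x = (e i).2 <;> simp [hlo, h, hna, hne]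
      have H : ∀ x : V, hi x i = if x = (e i).1 then 1 else 3 := fun x => by
        by_cases h : x = (e i).1 <;> simp [hhi, h, hna, hne]
      rw [L, L, H, H]
      by_cases h1 : u = (e i).2 <;> by_cases h2 : v = (e i).2 <;>
        by_cases h3 : u = (e i).1 <;> by_cases h4 : v = (e i).1 <;>
        first
          | exact absurd (h1.trans h2.symm) huv
          | exact absurd (h3.symm.trans h1) hne
          | exact absurd (h4.symm.trans h2) hne
          | (exfalso; rw [h1, h4] at hadj; exact hna2 hadj)
          | (exfalso; rw [h3, h2] at hadj; exact hna hadj)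
          | norm_num [h1, h2, h3, h4, hne, Ne.symm hne]
    · have L : ∀ x : V, lo x i = 0 := fun x => by
        simp only [hlo]; rw [if_neg]; rintro ⟨h1, _, h3⟩; exact hc ⟨h1, h3⟩
      have H : ∀ x : V, hi x i = 3 := fun x => by
        simp only [hhi]; rw [if_neg]; rintro ⟨h1, _, h3⟩; exact hc ⟨h1, h3⟩
      rw [L, L, H, H]; norm_num
  · intro hall
    by_contra hnadj
    have h0 : e (e.symm (u, v)) = (u, v) := e.apply_symm_apply _
    have := hall (e.symm (u, v))
    rw [hlo, hhi] at this
    simp only [h0] at this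
    split_ifs at this <;> first | tauto | norm_num at this


abbrev MP4 := genMycielski (SimpleGraph.pathGraph 4) 2

lemma adj_ab : MP4.Adj (some (0,1)) (some (1,0)) := by
  simp [genMycielski, SimpleGraph.fromRel_adj, SimpleGraph.pathGraph_adj]
lemma adj_bc : MP4.Adj (some (1,0)) (some (2,1)) := by
  simp [genMycielski, SimpleGraph.fromRel_adj, SimpleGraph.pathGraph_adj]
lemma adj_cd : MP4.Adj (some (2,1)) none := by
  simp [genMycielski, SimpleGraph.fromRel_adj, SimpleGraph.pathGraph_adj]
lemma adj_da : MP4.Adj none (some (0,1)) := by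
  exact (by simp [genMycielski, SimpleGraph.fromRel_adj,
    SimpleGraph.pathGraph_adj] : MP4.Adj (some (0,1)) none).symm
lemma nadj_ac : ¬ MP4.Adj (some (0,1)) (some (2,1)) := by
  simp [genMycielski, SimpleGraph.fromRel_adj, SimpleGraph.pathGraph_adj]
lemma nadj_bd : ¬ MP4.Adj (some (1,0)) none := by
  simp [genMycielski, SimpleGraph.fromRel_adj, SimpleGraph.pathGraph_adj]

lemma MP4_not_interval : ¬ IsIntervalGraph MP4 := by
  rintro ⟨lo, hi, h⟩
  have ha : (some ((0:Fin 4),(1:Fin 2)) : Option (Fin 4 × Fin 2)) ≠ some (1,0) := by decide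
  have hb : (some ((1:Fin 4),(0:Fin 2)) : Option (Fin 4 × Fin 2)) ≠ some (2,1) := by decide
  have hc : (some ((2:Fin 4),(1:Fin 2)) : Option (Fin 4 × Fin 2)) ≠ none := by decide
  have hd : (none : Option (Fin 4 × Fin 2)) ≠ some (0,1) := by decide
  have hac : (some ((0:Fin 4),(1:Fin 2)) : Option (Fin 4 × Fin 2)) ≠ some (2,1) := by decide
  refine c4_not_interval (lo (some (0,1)) 0) (hi (some (0,1)) 0)
    (lo (some (1,0)) 0) (hi (some (1,0)) 0)
    (lo (some (2,1)) 0) (hi (some (2,1)) 0)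
    (lo none 0) (hi none 0)
    ((h _ _ ha).mp adj_ab 0) ((h _ _ hb).mp adj_bc 0)
    ((h _ _ hc).mp adj_cd 0) ((h _ _ hd).mp adj_da 0)
    (fun hcon => nadj_ac ((h _ _ hac).mpr
      (fun i => by rw [Subsingleton.elim i 0]; exact hcon)))
    (fun hcon => nadj_bd ((h (some (1,0)) none (by decide)).mpr
      (fun i => by rw [Subsingleton.elim i 0]; exact hcon)))

lemma path4_boxicity : boxicity (SimpleGraph.pathGraph 4) = 1 := by
  have h1 : HasBoxRep (SimpleGraph.pathGraph 4) 1 := by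
    refine ⟨fun v _ => (v.val : ℝ), fun v _ => (v.val : ℝ) + 1, fun u v huv => ?_⟩
    have hne : (u.val : ℕ) ≠ v.val := fun h => huv (Fin.ext h)
    rw [SimpleGraph.pathGraph_adj]
    constructor
    · intro h i
      simp only [max_le_iff, le_min_iff]
      rcases h with h | h
      · have hr : (u.val : ℝ) + 1 = v.val := by exact_mod_cast h
        refine ⟨⟨?_, ?_⟩, ?_, ?_⟩ <;> linarith
      · have hr : (v.val : ℝ) + 1 = u.val := by exact_mod_cast h
        refine ⟨⟨?_, ?_⟩, ?_, ?_⟩ <;> linarith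
    · intro h
      have h0 := h 0
      simp only [max_le_iff, le_min_iff] at h0
      obtain ⟨⟨_, h1⟩, h2, _⟩ := h0
      have h1' : v.val ≤ u.val + 1 := by exact_mod_cast h1
      have h2' : u.val ≤ v.val + 1 := by exact_mod_cast h2
      omega
  have h0 : ¬ HasBoxRep (SimpleGraph.pathGraph 4) 0 := by
    rintro ⟨lo, hi, h⟩
    have hne : (0 : Fin 4) ≠ 2 := by decide
    have : (SimpleGraph.pathGraph 4).Adj 0 2 :=
      (h 0 2 hne).mpr (fun i => Fin.elim0 i)
    rw [SimpleGraph.pathGraph_adj] at this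
    revert this; decide
  have hle : boxicity (SimpleGraph.pathGraph 4) ≤ 1 := Nat.sInf_le h1
  have hne0 : boxicity (SimpleGraph.pathGraph 4) ≠ 0 := by
    intro hz
    have := Nat.sInf_mem (⟨1, h1⟩ : Set.Nonempty {k | HasBoxRep (SimpleGraph.pathGraph 4) k})
    rw [boxicity] at hz
    rw [hz] at this
    exact h0 this
  omega

lemma MP4_boxicity_ge : 2 ≤ boxicity MP4 := by
  obtain ⟨k, hk⟩ := exists_boxRep MP4
  have hmem := Nat.sInf_mem (⟨k, hk⟩ : Set.Nonempty {k | HasBoxRep MP4 k})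
  set m := sInf {k | HasBoxRep MP4 k} with hm
  have hne0 : m ≠ 0 := by
    intro hz
    rw [hz] at hmem
    obtain ⟨lo, hi, h⟩ := hmem
    have hac : (some ((0:Fin 4),(1:Fin 2)) : Option (Fin 4 × Fin 2)) ≠ some (2,1) := by decide
    exact nadj_ac ((h _ _ hac).mpr (fun i => Fin.elim0 i))
  have hne1 : m ≠ 1 := by
    intro hz
    rw [hz] at hmem
    exact MP4_not_interval hmem
  have : 2 ≤ m := by omega
  exact this

lemma path4_no_focal : ∀ v, ¬ IsFocal (SimpleGraph.pathGraph 4) v := by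
  intro v hf
  fin_cases v
  · have := hf 2 (by decide)
    rw [SimpleGraph.pathGraph_adj] at this; revert this; decide
  · have := hf 3 (by decide)
    rw [SimpleGraph.pathGraph_adj] at this; revert this; decide
  · have := hf 0 (by decide)
    rw [SimpleGraph.pathGraph_adj] at this; revert this; decide
  · have := hf 1 (by decide)
    rw [SimpleGraph.pathGraph_adj] at this; revert this; decide


/-- `M₂(P₄)` is not an interval graph, hence `box(M₂(P₄)) ≥ 2 > 1 = box(P₄)`;
thus there is a graph with no focal vertices whose Mycielski graph has strictly
larger boxicity. -/
theorem mycielski_P4_not_interval :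
    ¬ IsIntervalGraph (genMycielski (SimpleGraph.pathGraph 4) 2) ∧
    2 ≤ boxicity (genMycielski (SimpleGraph.pathGraph 4) 2) ∧
    boxicity (SimpleGraph.pathGraph 4) = 1 ∧
    ∃ (V : Type) (_ : Fintype V) (G : SimpleGraph V),
      (∀ v, ¬ IsFocal G v) ∧ boxicity G < boxicity (genMycielski G 2) := by
  refine ⟨MP4_not_interval, MP4_boxicity_ge, path4_boxicity,
    Fin 4, inferInstance, SimpleGraph.pathGraph 4, path4_no_focal, ?_⟩
  rw [path4_boxicity]
  exact lt_of_lt_of_le one_lt_two MP4_boxicity_ge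
end

section
/- If box(G) = n/2 − s for a graph G with n vertices and s ≥ 0, then the chromatic number satisfies χ(G) ≥ n/(2s + 2). -/
open SimpleGraph

namespace CDS19

open scoped Classical

section Aux

variable {V : Type*}


private lemma exists_pairing (G : SimpleGraph V) [DecidableEq V] (S : Finset V) :
    ∃ (P : List (V × V)) (Q : Finset V),
      (∀ pr ∈ P, pr.1 ≠ pr.2 ∧ ¬ G.Adj pr.1 pr.2) ∧
      (∀ x ∈ Q, ∀ y ∈ Q, x ≠ y → G.Adj x y) ∧
      Q ⊆ S ∧
      (∀ x ∈ S, (∃ pr ∈ P, x = pr.1 ∨ x = pr.2) ∨ x ∈ Q) ∧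
      S.card = 2 * P.length + Q.card := by
  generalize hm : S.card = m
  induction m using Nat.strong_induction_on generalizing S with
  | _ m ih =>
  by_cases hex : ∃ u ∈ S, ∃ v ∈ S, u ≠ v ∧ ¬ G.Adj u v
  · obtain ⟨u, hu, v, hv, huv, hnadj⟩ := hex
    have hvS : v ∈ S.erase u := Finset.mem_erase.2 ⟨huv.symm, hv⟩
    have hcard1 : (S.erase u).card = S.card - 1 := Finset.card_erase_of_mem hu
    have hcard2 : ((S.erase u).erase v).card = (S.erase u).card - 1 :=
      Finset.card_erase_of_mem hvS
    have hSpos : 1 ≤ (S.erase u).card := Finset.card_pos.2 ⟨v, hvS⟩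
    have hSpos2 : 1 ≤ S.card := Finset.card_pos.2 ⟨u, hu⟩
    obtain ⟨P, Q, h1, h2, h3, h4, h5⟩ :=
      ih ((S.erase u).erase v).card (by omega) _ rfl
    refine ⟨(u, v) :: P, Q, ?_, h2, ?_, ?_, ?_⟩
    · rintro pr hpr
      rcases List.mem_cons.mp hpr with h | h
      · subst h; exact ⟨huv, hnadj⟩
      · exact h1 pr h
    · exact h3.trans ((Finset.erase_subset _ _).trans (Finset.erase_subset _ _))
    · intro x hx
      by_cases hxu : x = u
      · exact Or.inl ⟨(u, v), List.mem_cons_self, Or.inl hxu⟩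
      by_cases hxv : x = v
      · exact Or.inl ⟨(u, v), List.mem_cons_self, Or.inr hxv⟩
      have : x ∈ (S.erase u).erase v :=
        Finset.mem_erase.2 ⟨hxv, Finset.mem_erase.2 ⟨hxu, hx⟩⟩
      rcases h4 x this with ⟨pr, hpr, hh⟩ | hh
      · exact Or.inl ⟨pr, List.mem_cons_of_mem _ hpr, hh⟩
      · exact Or.inr hh
    · simp only [List.length_cons]
      omega
  · push_neg at hex
    exact ⟨[], S, by simp, hex, subset_rfl, fun x hx => Or.inr hx, by simp [hm]⟩

/-! ### Gadget A: exact pair gadget for a nonadjacent pair -/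

noncomputable def loA (G : SimpleGraph V) (u₀ v₀ x : V) : ℕ :=
  if x = u₀ then 0 else if x = v₀ then 2 else if G.Adj x u₀ then 0 else 1

noncomputable def hiA (G : SimpleGraph V) (u₀ v₀ x : V) : ℕ :=
  if x = u₀ then 0 else if x = v₀ then 2 else if G.Adj x v₀ then 2 else 1

lemma A_edge {G : SimpleGraph V} {u₀ v₀ : V} (hnadj : ¬ G.Adj u₀ v₀)
    {x y : V} (hxy : G.Adj x y) :
    max (loA G u₀ v₀ x) (loA G u₀ v₀ y) ≤ min (hiA G u₀ v₀ x) (hiA G u₀ v₀ y) := by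
  have hxyne := hxy.ne
  have hsym := hxy.symm
  unfold loA hiA
  split_ifs <;> first
    | omega
    | (exfalso; subst_vars; simp_all [G.adj_comm])

lemma A_kill_u {G : SimpleGraph V} {u₀ v₀ : V}
    {x : V} (hx : x ≠ u₀) (hna : ¬ G.Adj x u₀) :
    ¬ (max (loA G u₀ v₀ x) (loA G u₀ v₀ u₀) ≤ min (hiA G u₀ v₀ x) (hiA G u₀ v₀ u₀)) := by
  unfold loA hiA
  split_ifs <;> simp_all <;> omega

lemma A_kill_v {G : SimpleGraph V} {u₀ v₀ : V} (hne : u₀ ≠ v₀)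
    {x : V} (hx : x ≠ v₀) (hna : ¬ G.Adj x v₀) :
    ¬ (max (loA G u₀ v₀ x) (loA G u₀ v₀ v₀) ≤ min (hiA G u₀ v₀ x) (hiA G u₀ v₀ v₀)) := by
  unfold loA hiA
  split_ifs <;> simp_all <;> omega


section GadgetB


noncomputable def pnB (G : SimpleGraph V) (e : V → ℕ) (n : ℕ) (a b z : V) : ℕ :=
  (if G.Adj z a then if G.Adj z b then 2 else 1 else if G.Adj z b then 3 else 0) * (n + 1) + e z

noncomputable def loB (G : SimpleGraph V) (I : Finset V) (e : V → ℕ) (n : ℕ) (a b x : V) : ℕ :=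
  if x = a then n + 1 else if x = b then 2*n + 2 else if x ∈ I then pnB G e n a b x else 0

noncomputable def hiB (G : SimpleGraph V) (I : Finset V) (e : V → ℕ) (n : ℕ) (a b x : V) : ℕ :=
  if x = a then 3*n + 2 else if x = b then 5*n + 4 else if x ∈ I then pnB G e n a b x else 5*n + 4

variable {G : SimpleGraph V} {I : Finset V} {e : V → ℕ} {n : ℕ} {a b : V}

lemma pn_le {z : V} (he : e z < n) : pnB G e n a b z ≤ 4*n + 2 := by
  unfold pnB; split_ifs <;> omega

lemma pn_a_of {z : V} (he : e z < n) (h : G.Adj z a) :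
    n + 1 ≤ pnB G e n a b z ∧ pnB G e n a b z ≤ 3*n + 2 := by
  unfold pnB; rw [if_pos h]; split_ifs <;> omega

lemma pn_a_not {z : V} (he : e z < n) (h : ¬ G.Adj z a) :
    ¬ (n + 1 ≤ pnB G e n a b z ∧ pnB G e n a b z ≤ 3*n + 2) := by
  unfold pnB; rw [if_neg h]; split_ifs <;> omega

lemma pn_b_of {z : V} (he : e z < n) (h : G.Adj z b) :
    2*n + 2 ≤ pnB G e n a b z ∧ pnB G e n a b z ≤ 5*n + 4 := by
  unfold pnB; split_ifs <;> omega

lemma pn_b_not {z : V} (he : e z < n) (h : ¬ G.Adj z b) :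
    ¬ (2*n + 2 ≤ pnB G e n a b z ∧ pnB G e n a b z ≤ 5*n + 4) := by
  unfold pnB; split_ifs <;> omega

lemma B_edge (hI : ∀ u ∈ I, ∀ v ∈ I, u ≠ v → ¬ G.Adj u v) (he : ∀ z, e z < n)
    (ha : a ∉ I) (hb : b ∉ I)
    {x y : V} (hxy : G.Adj x y) :
    max (loB G I e n a b x) (loB G I e n a b y) ≤ min (hiB G I e n a b x) (hiB G I e n a b y) := by
  have hxyne := hxy.ne
  have hsym := hxy.symm
  -- category of x and y
  unfold loB hiB
  by_cases hxa : x = a <;> by_cases hya : y = a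
  · exact absurd (hya ▸ hxa) hxyne
  · simp only [if_pos hxa, if_neg hya]
    by_cases hyb : y = b
    · simp only [if_pos hyb]; omega
    · simp only [if_neg hyb]
      by_cases hyI : y ∈ I
      · simp only [if_pos hyI]
        have := pn_a_of (a := a) (b := b) (he y) (hxa ▸ hsym)
        omega
      · simp only [if_neg hyI]; omega
  · simp only [if_neg hxa, if_pos hya]
    by_cases hxb : x = b
    · simp only [if_pos hxb]; omega
    · simp only [if_neg hxb]
      by_cases hxI : x ∈ I
      · simp only [if_pos hxI]
        have := pn_a_of (a := a) (b := b) (he x) (hya ▸ hxy)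
        omega
      · simp only [if_neg hxI]; omega
  · simp only [if_neg hxa, if_neg hya]
    by_cases hxb : x = b <;> by_cases hyb : y = b
    · exact absurd (hyb ▸ hxb) hxyne
    · simp only [if_pos hxb, if_neg hyb]
      by_cases hyI : y ∈ I
      · simp only [if_pos hyI]
        have := pn_b_of (a := a) (b := b) (he y) (hxb ▸ hsym)
        omega
      · simp only [if_neg hyI]; omega
    · simp only [if_neg hxb, if_pos hyb]
      by_cases hxI : x ∈ I
      · simp only [if_pos hxI]
        have := pn_b_of (a := a) (b := b) (he x) (hyb ▸ hxy)
        omega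
      · simp only [if_neg hxI]; omega
    · simp only [if_neg hxb, if_neg hyb]
      by_cases hxI : x ∈ I <;> by_cases hyI : y ∈ I
      · exact absurd hxy (hI x hxI y hyI hxyne)
      · simp only [if_pos hxI, if_neg hyI]
        have := pn_le (G := G) (a := a) (b := b) (he x); omega
      · simp only [if_neg hxI, if_pos hyI]
        have := pn_le (G := G) (a := a) (b := b) (he y); omega
      · simp only [if_neg hxI, if_neg hyI]; omega

lemma B_kill_pt (he : ∀ z, e z < n) (hinj : Function.Injective e)
    (ha : a ∉ I) (hb : b ∉ I) {u v : V} (hu : u ∈ I) (hv : v ∈ I) (hne : u ≠ v) :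
    ¬ (max (loB G I e n a b u) (loB G I e n a b v) ≤
        min (hiB G I e n a b u) (hiB G I e n a b v)) := by
  have hua : u ≠ a := fun h => ha (h ▸ hu)
  have hub : u ≠ b := fun h => hb (h ▸ hu)
  have hva : v ≠ a := fun h => ha (h ▸ hv)
  have hvb : v ≠ b := fun h => hb (h ▸ hv)
  have hpn : pnB G e n a b u ≠ pnB G e n a b v := by
    intro heq
    have h1 := he u
    have h2 := he v
    unfold pnB at heq
    split_ifs at heq <;> first
      | omega
      | exact hne (hinj (by omega))
  simp only [loB, hiB, if_neg hua, if_neg hub, if_neg hva, if_neg hvb, if_pos hu, if_pos hv]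
  omega

lemma B_kill_za (he : ∀ z, e z < n) (ha : a ∉ I) (hb : b ∉ I)
    {z : V} (hz : z ∈ I) (hna : ¬ G.Adj z a) :
    ¬ (max (loB G I e n a b z) (loB G I e n a b a) ≤
        min (hiB G I e n a b z) (hiB G I e n a b a)) := by
  have hza : z ≠ a := fun h => ha (h ▸ hz)
  have hzb : z ≠ b := fun h => hb (h ▸ hz)
  have := pn_a_not (a := a) (b := b) (he z) hna
  have e1 : loB G I e n a b a = n + 1 := by unfold loB; rw [if_pos rfl]
  have e2 : hiB G I e n a b a = 3*n + 2 := by unfold hiB; rw [if_pos rfl]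
  simp only [loB, hiB, if_neg hza, if_neg hzb, if_pos hz] at *
  rw [e1, e2]
  omega

lemma B_kill_zb (he : ∀ z, e z < n) (ha : a ∉ I) (hb : b ∉ I) (hba : b ≠ a)
    {z : V} (hz : z ∈ I) (hnb : ¬ G.Adj z b) :
    ¬ (max (loB G I e n a b z) (loB G I e n a b b) ≤
        min (hiB G I e n a b z) (hiB G I e n a b b)) := by
  have hza : z ≠ a := fun h => ha (h ▸ hz)
  have hzb : z ≠ b := fun h => hb (h ▸ hz)
  have := pn_b_not (a := a) (b := b) (he z) hnb
  have e1 : loB G I e n a b b = 2*n + 2 := by unfold loB; rw [if_neg hba, if_pos rfl]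
  have e2 : hiB G I e n a b b = 5*n + 4 := by unfold hiB; rw [if_neg hba, if_pos rfl]
  simp only [loB, hiB, if_neg hza, if_neg hzb, if_pos hz] at *
  rw [e1, e2]
  omega

/-! ### Gadget C: wholesale gadget with no specials -/

noncomputable def loC (I : Finset V) (e : V → ℕ) (x : V) : ℕ :=
  if x ∈ I then e x else 0

noncomputable def hiC (I : Finset V) (e : V → ℕ) (n : ℕ) (x : V) : ℕ :=
  if x ∈ I then e x else 5*n + 4

lemma C_edge (hI : ∀ u ∈ I, ∀ v ∈ I, u ≠ v → ¬ G.Adj u v) (he : ∀ z, e z < n)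
    {x y : V} (hxy : G.Adj x y) :
    max (loC I e x) (loC I e y) ≤ min (hiC I e n x) (hiC I e n y) := by
  have h1 := he x
  have h2 := he y
  unfold loC hiC
  by_cases hxI : x ∈ I <;> by_cases hyI : y ∈ I
  · exact absurd hxy (hI x hxI y hyI hxy.ne)
  · simp only [if_pos hxI, if_neg hyI]; omega
  · simp only [if_neg hxI, if_pos hyI]; omega
  · simp only [if_neg hxI, if_neg hyI]; omega

lemma C_kill (hinj : Function.Injective e)
    {u v : V} (hu : u ∈ I) (hv : v ∈ I) (hne : u ≠ v) :
    ¬ (max (loC I e u) (loC I e v) ≤ min (hiC I e n u) (hiC I e n v)) := by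
  have : e u ≠ e v := fun h => hne (hinj h)
  simp only [loC, hiC, if_pos hu, if_pos hv]
  omega


end GadgetB

/-! ### Coordinate dispatch -/


noncomputable def loN (G : SimpleGraph V) (I : Finset V) (e : V → ℕ) (n : ℕ)
    (P : List (V × V)) (ab : ℕ → Option (V × V)) (x : V) (i : ℕ) : ℕ :=
  if h : i < P.length then loA G (P.get ⟨i, h⟩).1 (P.get ⟨i, h⟩).2 x
  else (ab (i - P.length)).elim (loC I e x) (fun pr => loB G I e n pr.1 pr.2 x)

noncomputable def hiN (G : SimpleGraph V) (I : Finset V) (e : V → ℕ) (n : ℕ)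
    (P : List (V × V)) (ab : ℕ → Option (V × V)) (x : V) (i : ℕ) : ℕ :=
  if h : i < P.length then hiA G (P.get ⟨i, h⟩).1 (P.get ⟨i, h⟩).2 x
  else (ab (i - P.length)).elim (hiC I e n x) (fun pr => hiB G I e n pr.1 pr.2 x)

lemma key (G : SimpleGraph V) [Fintype V] (I : Finset V)
    (hI : ∀ u ∈ I, ∀ v ∈ I, u ≠ v → ¬ G.Adj u v) :
    ∃ K : ℕ, HasBoxRep G K ∧ 2 * K ≤ (Fintype.card V - I.card) + 2 := by
  classical
  obtain ⟨P, Q, hP, hQ, hQS, hcov, hcard⟩ := exists_pairing G (Finset.univ \ I)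
  set n := Fintype.card V with hn
  set qs : List V := Q.toList with hqs
  have hqs_len : qs.length = Q.card := Finset.length_toList Q
  have hqs_nodup : qs.Nodup := Finset.nodup_toList Q
  set W : ℕ := if Q.card = 0 then 1 else (Q.card + 1) / 2 with hW
  have hW1 : 1 ≤ W := by rw [hW]; split <;> omega
  set K := P.length + W with hK
  set e : V → ℕ := fun z => ((Fintype.equivFin V) z : ℕ) with he'
  have he : ∀ z, e z < n := fun z => ((Fintype.equivFin V) z).isLt
  have hinj : Function.Injective e := fun z w hzw =>
    (Fintype.equivFin V).injective (Fin.ext hzw)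
  have hQI : ∀ x ∈ Q, x ∉ I := fun x hx => (Finset.mem_sdiff.mp (hQS hx)).2
  set ab : ℕ → Option (V × V) := fun j =>
    if h : 2*j + 1 < qs.length then some (qs.get ⟨2*j, by omega⟩, qs.get ⟨2*j+1, h⟩)
    else if h2 : 2*j < qs.length then some (qs.get ⟨2*j, h2⟩, qs.get ⟨2*j, h2⟩)
    else none with hab
  have hab_mem : ∀ j c d, ab j = some (c, d) → c ∈ Q ∧ d ∈ Q := by
    intro j c d habj
    simp only [hab] at habj
    split_ifs at habj with h1 h2
    all_goals cases habj
    all_goals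
      exact ⟨Finset.mem_toList.mp (List.get_mem _ _),
             Finset.mem_toList.mp (List.get_mem _ _)⟩
  have hab_I : ∀ j c d, ab j = some (c, d) → c ∉ I ∧ d ∉ I := by
    intro j c d habj
    obtain ⟨hc, hd⟩ := hab_mem j c d habj
    exact ⟨hQI c hc, hQI d hd⟩
  have cover : ∀ w, w ∉ I →
      (∃ k, ∃ hk : k < P.length, w = (P.get ⟨k, hk⟩).1 ∨ w = (P.get ⟨k, hk⟩).2) ∨
      (∃ i, ∃ hi : i < qs.length, qs.get ⟨i, hi⟩ = w) := by
    intro w hw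
    rcases hcov w (Finset.mem_sdiff.mpr ⟨Finset.mem_univ w, hw⟩) with ⟨pr, hpr, hw'⟩ | hw'
    · obtain ⟨⟨k, hk⟩, hget⟩ := List.mem_iff_get.mp hpr
      exact Or.inl ⟨k, hk, by rw [hget]; exact hw'⟩
    · obtain ⟨⟨i, hi⟩, hget⟩ := List.mem_iff_get.mp (Finset.mem_toList.mpr hw')
      exact Or.inr ⟨i, hi, hget⟩
  have qcoord : ∀ i, ∀ hi : i < qs.length, ∃ j, j < W ∧ ∃ c d,
      ab j = some (c, d) ∧ (qs.get ⟨i, hi⟩ = c ∨ qs.get ⟨i, hi⟩ = d) := by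
    intro i hi
    have hq0 : Q.card ≠ 0 := by omega
    refine ⟨i / 2, by rw [hW, if_neg hq0]; omega, ?_⟩
    by_cases h1 : 2*(i/2) + 1 < qs.length
    · refine ⟨qs.get ⟨2*(i/2), by omega⟩, qs.get ⟨2*(i/2)+1, h1⟩,
        by simp only [hab]; rw [dif_pos h1], ?_⟩
      rcases (by omega : i = 2*(i/2) ∨ i = 2*(i/2) + 1) with h | h
      · left
        have hfe : (⟨i, hi⟩ : Fin qs.length) = ⟨2*(i/2), by omega⟩ := Fin.ext h
        rw [hfe]
      · right
        have hfe : (⟨i, hi⟩ : Fin qs.length) = ⟨2*(i/2)+1, h1⟩ := Fin.ext h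
        rw [hfe]
    · have h2 : 2*(i/2) < qs.length := by omega
      refine ⟨qs.get ⟨2*(i/2), h2⟩, qs.get ⟨2*(i/2), h2⟩,
        by simp only [hab]; rw [dif_neg h1, dif_pos h2], ?_⟩
      left
      have hieq : i = 2*(i/2) := by omega
      have hfe : (⟨i, hi⟩ : Fin qs.length) = ⟨2*(i/2), h2⟩ := Fin.ext hieq
      rw [hfe]
  refine ⟨K, ⟨fun x i => (loN G I e n P ab x (i : ℕ) : ℝ),
              fun x i => (hiN G I e n P ab x (i : ℕ) : ℝ), ?_⟩, ?_⟩
  · intro u v huv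
    constructor
    · intro hadj i
      have hNat : max (loN G I e n P ab u i) (loN G I e n P ab v i) ≤
          min (hiN G I e n P ab u i) (hiN G I e n P ab v i) := by
        unfold loN hiN
        by_cases hip : (i : ℕ) < P.length
        · simp only [dif_pos hip]
          exact A_edge (hP _ (List.get_mem _ _)).2 hadj
        · simp only [dif_neg hip]
          rcases habj : ab ((i : ℕ) - P.length) with _ | ⟨c, d⟩
          · simp only [Option.elim_none]
            exact C_edge hI he hadj
          · simp only [Option.elim_some]
            obtain ⟨hc, hd⟩ := hab_I _ _ _ habj
            exact B_edge hI he hc hd hadj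
      beta_reduce
      exact_mod_cast hNat
    · intro hall
      by_contra hnadj
      have hnadj' : ¬ G.Adj v u := fun hh => hnadj hh.symm
      suffices hex : ∃ i : Fin K, ¬ (max (loN G I e n P ab u i) (loN G I e n P ab v i) ≤
          min (hiN G I e n P ab u i) (hiN G I e n P ab v i)) by
        obtain ⟨i, hkill⟩ := hex
        have hre := hall i
        beta_reduce at hre
        exact hkill (by exact_mod_cast hre)
      have pairkill : ∀ w w', w' ≠ w → ¬ G.Adj w' w →
          (∃ k, ∃ hk : k < P.length, w = (P.get ⟨k, hk⟩).1 ∨ w = (P.get ⟨k, hk⟩).2) →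
          ∃ i : Fin K, ¬ (max (loN G I e n P ab w' i) (loN G I e n P ab w i) ≤
            min (hiN G I e n P ab w' i) (hiN G I e n P ab w i)) := by
        rintro w w' hne hna ⟨k, hk, hget⟩
        refine ⟨⟨k, by omega⟩, ?_⟩
        unfold loN hiN
        simp only [Fin.val_mk, dif_pos hk]
        obtain ⟨hne12, hnadj12⟩ := hP _ (List.get_mem P ⟨k, hk⟩)
        rcases hget with h1 | h1
        · rw [h1] at hne hna ⊢
          exact A_kill_u hne hna
        · rw [h1] at hne hna ⊢
          exact A_kill_v hne12 hne hna
      have qkill : ∀ w w', w' ∈ I → ¬ G.Adj w' w →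
          (∃ i, ∃ hi : i < qs.length, qs.get ⟨i, hi⟩ = w) →
          ∃ i : Fin K, ¬ (max (loN G I e n P ab w' i) (loN G I e n P ab w i) ≤
            min (hiN G I e n P ab w' i) (hiN G I e n P ab w i)) := by
        rintro w w' hw'I hna ⟨i, hi, hget⟩
        obtain ⟨j, hjW, c, d, habj, hcd⟩ := qcoord i hi
        refine ⟨⟨P.length + j, by omega⟩, ?_⟩
        unfold loN hiN
        simp only [Fin.val_mk, dif_neg (show ¬ P.length + j < P.length by omega)]
        rw [show P.length + j - P.length = j by omega, habj]
        simp only [Option.elim_some]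
        obtain ⟨hcI, hdI⟩ := hab_I _ _ _ habj
        rcases hcd with hc | hd
        · have hwc : w = c := by rw [← hget, hc]
          rw [hwc] at hna
          rw [hwc]
          exact B_kill_za he hcI hdI hw'I hna
        · have hwd : w = d := by rw [← hget, hd]
          by_cases hdc : d = c
          · rw [hwd, hdc] at hna ⊢
            exact B_kill_za he hcI hcI hw'I hna
          · rw [hwd] at hna ⊢
            exact B_kill_zb he hcI hdI hdc hw'I hna
      by_cases hu : u ∈ I <;> by_cases hv : v ∈ I
      · refine ⟨⟨P.length, by omega⟩, ?_⟩
        unfold loN hiN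
        simp only [Fin.val_mk, dif_neg (show ¬ P.length < P.length by omega)]
        rw [show P.length - P.length = 0 by omega]
        rcases hab0 : ab 0 with _ | ⟨c, d⟩
        · simp only [Option.elim_none]
          exact C_kill hinj hu hv huv
        · simp only [Option.elim_some]
          obtain ⟨hcI, hdI⟩ := hab_I _ _ _ hab0
          exact B_kill_pt he hinj hcI hdI hu hv huv
      · rcases cover v hv with hc | hc
        · exact pairkill v u huv hnadj hc
        · exact qkill v u hu hnadj hc
      · rcases cover u hu with hc | hc
        · obtain ⟨i, hkill⟩ := pairkill u v (Ne.symm huv) hnadj' hc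
          exact ⟨i, by rwa [max_comm, min_comm] at hkill⟩
        · obtain ⟨i, hkill⟩ := qkill u v hv hnadj' hc
          exact ⟨i, by rwa [max_comm, min_comm] at hkill⟩
      · rcases cover u hu with hc | hcq
        · obtain ⟨i, hkill⟩ := pairkill u v (Ne.symm huv) hnadj' hc
          exact ⟨i, by rwa [max_comm, min_comm] at hkill⟩
        rcases cover v hv with hc | hcq2
        · exact pairkill v u huv hnadj hc
        obtain ⟨i1, hi1, hg1⟩ := hcq
        obtain ⟨i2, hi2, hg2⟩ := hcq2
        have hu2 : u ∈ Q := by rw [← hg1]; exact Finset.mem_toList.mp (List.get_mem _ _)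
        have hv2 : v ∈ Q := by rw [← hg2]; exact Finset.mem_toList.mp (List.get_mem _ _)
        exact absurd (hQ u hu2 v hv2 huv) hnadj
  · have hcards : (Finset.univ \ I).card = n - I.card := by
      rw [Finset.card_sdiff_of_subset (Finset.subset_univ I), Finset.card_univ]
    rw [hcards] at hcard
    rw [hK, hW]
    split_ifs with h0 <;> omega


end Aux

end CDS19

/-- Chandran–Das–Shah: if `box(G) = n/2 - s` with `s ≥ 0`, then
`χ(G) ≥ n/(2s+2)`, where `n` is the number of vertices of `G`. -/
theorem chromatic_ge_of_large_boxicity {V : Type*} [Fintype V] (G : SimpleGraph V)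
    (s : ℕ) (h : (boxicity G : ℝ) = (Fintype.card V : ℝ) / 2 - s) :
    (Fintype.card V : ℝ) / (2 * s + 2) ≤ (G.chromaticNumber.toNat : ℝ) := by
  classical
  by_cases hn0 : Fintype.card V = 0
  · rw [hn0]
    simp only [Nat.cast_zero, zero_div]
    positivity
  · have hcol : G.Colorable (G.chromaticNumber.toNat) := G.colorable_chromaticNumber_of_fintype
    obtain ⟨C⟩ := hcol
    set c := G.chromaticNumber.toNat with hc
    have hc0 : c ≠ 0 := by
      intro h0
      rw [h0] at C
      have : IsEmpty V := ⟨fun v => (C v).elim0⟩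
      exact hn0 Fintype.card_eq_zero
    haveI : Nonempty (Fin c) := ⟨⟨0, Nat.pos_of_ne_zero hc0⟩⟩
    set f : Fin c → Finset V := fun i => Finset.univ.filter (fun v => C v = i) with hf
    have hsum : ∑ i, (f i).card = Fintype.card V := by
      rw [← Finset.card_univ]
      exact (Finset.card_eq_sum_card_fiberwise (fun v _ => Finset.mem_univ (C v))).symm
    obtain ⟨i0, -, hmax⟩ := Finset.exists_max_image Finset.univ (fun i => (f i).card)
      Finset.univ_nonempty
    have hnct : Fintype.card V ≤ c * (f i0).card := by
      calc Fintype.card V = ∑ i, (f i).card := hsum.symm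
        _ ≤ Finset.univ.card • (f i0).card :=
            Finset.sum_le_card_nsmul _ _ _ (fun i _ => hmax i (Finset.mem_univ i))
        _ = c * (f i0).card := by
            rw [Finset.card_univ, Fintype.card_fin, smul_eq_mul]
    have hIind : ∀ u ∈ f i0, ∀ v ∈ f i0, u ≠ v → ¬ G.Adj u v := by
      intro u hu v hv huv hadj
      have hu' := (Finset.mem_filter.mp hu).2
      have hv' := (Finset.mem_filter.mp hv).2
      exact (C.valid hadj) (hu'.trans hv'.symm)
    obtain ⟨K, hrep, hKle⟩ := CDS19.key G (f i0) hIind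
    have hbox : boxicity G ≤ K := Nat.sInf_le hrep
    have ht_le : (f i0).card ≤ Fintype.card V := Finset.card_le_univ _
    have h2K : (2 * K : ℝ) ≤ (Fintype.card V : ℝ) - (f i0).card + 2 := by
      have hcast : ((Fintype.card V - (f i0).card : ℕ) : ℝ)
          = (Fintype.card V : ℝ) - (f i0).card := Nat.cast_sub ht_le
      calc (2 * K : ℝ) = ((2 * K : ℕ) : ℝ) := by push_cast; ring
        _ ≤ (((Fintype.card V - (f i0).card) + 2 : ℕ) : ℝ) := Nat.cast_le.mpr hKle
        _ = (Fintype.card V : ℝ) - (f i0).card + 2 := by rw [Nat.cast_add, hcast]; norm_num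
    have hboxR : (Fintype.card V : ℝ) / 2 - s ≤ K := by
      rw [← h]; exact_mod_cast hbox
    have htle : ((f i0).card : ℝ) ≤ 2 * s + 2 := by linarith
    have hfinal : (Fintype.card V : ℝ) ≤ c * (2 * s + 2) := by
      calc (Fintype.card V : ℝ) ≤ (c : ℝ) * (f i0).card := by exact_mod_cast hnct
        _ ≤ c * (2 * s + 2) := mul_le_mul_of_nonneg_left htle (by positivity)
    rw [div_le_iff₀ (by positivity)]
    exact hfinal
end
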